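/- If f : ℝ → ℝ is C² with polynomial growth and lim_{|x|→∞} f(x) = +∞, then F(μ,σ) → +∞ as |μ| + σ → +∞, where F(μ,σ) = ∫ f(x) Γ_{μ,σ}(x) dx. -/

import Mathlib

open Real MeasureTheory Filter Topology

noncomputable def gauss (μ σ x : ℝ) : ℝ :=
  Real.exp (-(x - μ)^2 / (2 * σ^2)) / (Real.sqrt (2 * Real.pi) * σ)

lemma gauss_eq (μ σ x : ℝ) : gauss μ σ x
    = (Real.sqrt (2 * Real.pi) * σ)⁻¹ * Real.exp (-(1/(2*σ^2)) * (x - μ)^2) := by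
  rw [gauss, div_eq_inv_mul]
  ring_nf

lemma gauss_nonneg (μ σ x : ℝ) (hσ : 0 < σ) : 0 ≤ gauss μ σ x := by
  rw [gauss]
  have : 0 < Real.sqrt (2 * Real.pi) * σ := by positivity
  positivity

lemma sqrt_two_pi_pos : 0 < Real.sqrt (2 * Real.pi) := by positivity

lemma one_le_sqrt_two_pi : 1 ≤ Real.sqrt (2 * Real.pi) := by
  rw [show (1:ℝ) = Real.sqrt 1 by simp]
  apply Real.sqrt_le_sqrt
  nlinarith [Real.pi_gt_three]

lemma integrable_gauss (μ σ : ℝ) (hσ : 0 < σ) : Integrable (gauss μ σ) := by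
  have hb : (0:ℝ) < 1/(2*σ^2) := by positivity
  have h1 : Integrable (fun x : ℝ => Real.exp (-(1/(2*σ^2)) * x^2)) :=
    integrable_exp_neg_mul_sq hb
  have h2 := (h1.comp_sub_right μ).const_mul (Real.sqrt (2 * Real.pi) * σ)⁻¹
  refine h2.congr ?_
  filter_upwards with x
  rw [gauss_eq]

lemma integral_gauss (μ σ : ℝ) (hσ : 0 < σ) : ∫ x : ℝ, gauss μ σ x = 1 := by
  have hb : (0:ℝ) < 1/(2*σ^2) := by positivity
  simp_rw [gauss_eq]
  rw [integral_const_mul]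
  rw [show (fun x : ℝ => Real.exp (-(1/(2*σ^2)) * (x - μ)^2)) = fun x : ℝ =>
    (fun y : ℝ => Real.exp (-(1/(2*σ^2)) * y^2)) (x - μ) from rfl]
  rw [integral_sub_right_eq_self (fun y : ℝ => Real.exp (-(1/(2*σ^2)) * y^2)) μ]
  rw [integral_gaussian]
  rw [show π / (1/(2*σ^2)) = 2 * π * σ^2 by field_simp]
  have h3 : Real.sqrt (2*π*σ^2) = Real.sqrt 2 * Real.sqrt π * σ := by
    rw [show 2*π*σ^2 = (2*π)*σ^2 by ring, Real.sqrt_mul (by positivity),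
      Real.sqrt_sq hσ.le, Real.sqrt_mul (by norm_num)]
  rw [h3]
  have h2 : Real.sqrt 2 ≠ 0 := by positivity
  have hpi : Real.sqrt π ≠ 0 := by positivity
  field_simp
  rw [Real.sqrt_mul (by norm_num)]

lemma integrable_abs_rpow_mul_exp {b m : ℝ} (hb : 0 < b) (hm : 0 ≤ m) :
    Integrable fun x : ℝ => |x| ^ m * Real.exp (-b * x^2) := by
  set n : ℕ := ⌈m⌉₊ with hn
  have hpow : Integrable fun x : ℝ => |x ^ n * Real.exp (-b * x^2)| := by
    refine Integrable.abs ?_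
    have := integrable_rpow_mul_exp_neg_mul_sq hb (s := (n:ℝ))
      (lt_of_lt_of_le neg_one_lt_zero (Nat.cast_nonneg n))
    refine this.congr ?_
    filter_upwards with x
    rw [Real.rpow_natCast]
  have hexp : Integrable fun x : ℝ => Real.exp (-b * x^2) :=
    integrable_exp_neg_mul_sq hb
  refine Integrable.mono' (hexp.add hpow) ?_ ?_
  · apply Continuous.aestronglyMeasurable
    exact (continuous_abs.rpow_const (fun x => Or.inr hm)).mul
      (Continuous.rexp (by continuity))
  · filter_upwards with x
    have he : (0:ℝ) < Real.exp (-b * x^2) := Real.exp_pos _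
    rw [Real.norm_eq_abs, abs_mul, abs_of_nonneg (Real.rpow_nonneg (abs_nonneg x) m),
      abs_of_nonneg he.le]
    have hbd : |x| ^ m ≤ 1 + |x| ^ n := by
      rcases le_or_gt |x| 1 with h | h
      · have : |x| ^ m ≤ (1:ℝ) := by
          calc |x| ^ m ≤ 1 ^ m := Real.rpow_le_rpow (abs_nonneg x) h hm
          _ = 1 := Real.one_rpow m
        have h2 : (0:ℝ) ≤ |x| ^ n := by positivity
        linarith
      · have : |x| ^ m ≤ |x| ^ (n:ℝ) := by
          apply Real.rpow_le_rpow_of_exponent_le h.le (Nat.le_ceil m)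
        rw [Real.rpow_natCast] at this
        have : |x| ^ m ≤ |x| ^ n := this
        have h2 : |x ^ n * Real.exp (-b * x^2)| = |x|^n * Real.exp (-b * x^2) := by
          rw [abs_mul, abs_pow, abs_of_nonneg he.le]
        linarith
    calc |x| ^ m * Real.exp (-b * x^2) ≤ (1 + |x| ^ n) * Real.exp (-b * x^2) := by
          apply mul_le_mul_of_nonneg_right hbd he.le
      _ = Real.exp (-b * x^2) + |x|^n * Real.exp (-b * x^2) := by ring
      _ = Real.exp (-b * x^2) + |x ^ n * Real.exp (-b * x^2)| := by
          rw [abs_mul, abs_pow, abs_of_nonneg he.le]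

lemma add_rpow_le {a c m : ℝ} (ha : 0 ≤ a) (hc : 0 ≤ c) (hm : 0 ≤ m) :
    (a + c) ^ m ≤ 2 ^ m * (a ^ m + c ^ m) := by
  have h1 : a + c ≤ 2 * max a c := by
    rcases max_cases a c with ⟨h, h'⟩ | ⟨h, h'⟩ <;> rw [h] <;> linarith
  calc (a + c) ^ m ≤ (2 * max a c) ^ m :=
        Real.rpow_le_rpow (by positivity) h1 hm
    _ = 2 ^ m * (max a c) ^ m := Real.mul_rpow (by norm_num) (le_max_iff.2 (Or.inl ha))
    _ ≤ 2 ^ m * (a ^ m + c ^ m) := by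
        apply mul_le_mul_of_nonneg_left _ (by positivity)
        rcases max_cases a c with ⟨h, h'⟩ | ⟨h, h'⟩ <;> rw [h]
        · nlinarith [Real.rpow_nonneg hc m]
        · nlinarith [Real.rpow_nonneg ha m]

lemma poly_bound {f : ℝ → ℝ} {m : ℝ} (hfc : Continuous f) (hm : 0 < m)
    (ht : Tendsto (fun x : ℝ => f x / |x| ^ m) (cocompact ℝ) (𝓝 0)) :
    ∃ C : ℝ, 0 ≤ C ∧ ∀ x, |f x| ≤ C + |x| ^ m := by
  have h1 : ∀ᶠ x in cocompact ℝ, |f x / |x| ^ m| < 1 := by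
    have := Metric.tendsto_nhds.mp ht 1 one_pos
    simp only [Real.dist_eq, sub_zero] at this
    exact this
  rw [Filter.hasBasis_cocompact.eventually_iff] at h1
  obtain ⟨K, hK, hK1⟩ := h1
  obtain ⟨r, hr⟩ := hK.isBounded.subset_closedBall 0
  set r' : ℝ := max r 1 with hr'
  have hr'1 : (1:ℝ) ≤ r' := le_max_right r 1
  obtain ⟨C₀, hC₀⟩ := (isCompact_Icc (a := -r') (b := r')).exists_bound_of_continuousOn
    hfc.continuousOn
  refine ⟨max C₀ 0, le_max_right _ _, fun x => ?_⟩
  rcases le_or_gt |x| r' with h | h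
  · have : |f x| ≤ C₀ := by
      simpa using hC₀ x (abs_le.mp h)
    have h2 : (0:ℝ) ≤ |x| ^ m := Real.rpow_nonneg (abs_nonneg x) m
    calc |f x| ≤ C₀ := this
      _ ≤ max C₀ 0 := le_max_left _ _
      _ ≤ max C₀ 0 + |x| ^ m := by linarith
  · have hx : x ∉ K := by
      intro hxK
      have := hr hxK
      simp only [Metric.mem_closedBall, Real.dist_eq, sub_zero] at this
      have : |x| ≤ r' := this.trans (le_max_left r 1)
      linarith
    have h2 := (hK1 hx).le
    have hpos : (0:ℝ) < |x| ^ m := Real.rpow_pos_of_pos (by linarith) m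
    rw [abs_div, abs_of_nonneg hpos.le, div_le_one hpos] at h2
    calc |f x| = |f x| := rfl
      _ ≤ |x| ^ m := by simpa using h2
      _ ≤ max C₀ 0 + |x| ^ m := by
          have := le_max_right C₀ 0
          linarith

lemma integrable_f_gauss {f : ℝ → ℝ} {C m : ℝ} (hfc : Continuous f) (hm : 0 < m)
    (hC : 0 ≤ C) (hbd : ∀ x, |f x| ≤ C + |x| ^ m) (μ σ : ℝ) (hσ : 0 < σ) :
    Integrable fun x : ℝ => f x * gauss μ σ x := by
  have hb : (0:ℝ) < 1/(2*σ^2) := by positivity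
  set c : ℝ := (Real.sqrt (2 * Real.pi) * σ)⁻¹ with hc
  have hcpos : 0 < c := by rw [hc]; positivity
  set C' : ℝ := C + 2 ^ m * |μ| ^ m with hC'
  -- dominating function
  have hg : Integrable fun y : ℝ =>
      c * ((C' + 2 ^ m * |y| ^ m) * Real.exp (-(1/(2*σ^2)) * y^2)) := by
    have h1 : Integrable fun y : ℝ => Real.exp (-(1/(2*σ^2)) * y^2) :=
      integrable_exp_neg_mul_sq hb
    have h2 : Integrable fun y : ℝ => |y| ^ m * Real.exp (-(1/(2*σ^2)) * y^2) :=
      integrable_abs_rpow_mul_exp hb hm.le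
    have := ((h1.const_mul C').add (h2.const_mul (2^m))).const_mul c
    refine this.congr ?_
    filter_upwards with y
    simp only [Pi.add_apply]
    ring
  have hgs := hg.comp_sub_right μ
  refine Integrable.mono' hgs ?_ ?_
  · exact (hfc.mul (by unfold gauss; fun_prop)).aestronglyMeasurable
  · filter_upwards with x
    have hgn := gauss_nonneg μ σ x hσ
    rw [Real.norm_eq_abs, abs_mul, abs_of_nonneg hgn]
    have key : |x| ^ m ≤ 2 ^ m * |x - μ| ^ m + 2 ^ m * |μ| ^ m := by
      have h1 : |x| ≤ |x - μ| + |μ| := by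
        calc |x| = |(x - μ) + μ| := by ring_nf
          _ ≤ |x - μ| + |μ| := abs_add_le _ _
      calc |x| ^ m ≤ (|x - μ| + |μ|) ^ m :=
            Real.rpow_le_rpow (abs_nonneg x) h1 hm.le
        _ ≤ 2 ^ m * (|x - μ| ^ m + |μ| ^ m) :=
            add_rpow_le (abs_nonneg _) (abs_nonneg _) hm.le
        _ = 2 ^ m * |x - μ| ^ m + 2 ^ m * |μ| ^ m := by ring
    have hge : gauss μ σ x = c * Real.exp (-(1/(2*σ^2)) * (x - μ)^2) := gauss_eq μ σ x
    have hexp : (0:ℝ) < Real.exp (-(1/(2*σ^2)) * (x - μ)^2) := Real.exp_pos _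
    calc |f x| * gauss μ σ x ≤ (C + |x| ^ m) * gauss μ σ x :=
          mul_le_mul_of_nonneg_right (hbd x) hgn
      _ ≤ (C' + 2 ^ m * |x - μ| ^ m) * gauss μ σ x := by
          apply mul_le_mul_of_nonneg_right _ hgn
          rw [hC']
          linarith
      _ = c * ((C' + 2 ^ m * |x - μ| ^ m) * Real.exp (-(1/(2*σ^2)) * (x - μ)^2)) := by
          rw [hge]; ring

lemma exp_neg_le_inv {t : ℝ} (ht : 0 < t) : Real.exp (-t) ≤ t⁻¹ := by
  rw [Real.exp_neg]
  apply inv_anti₀ ht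
  have := Real.add_one_le_exp t
  linarith

lemma mass_bound (μ σ R : ℝ) (hσ : 0 < σ) (hR : 1 ≤ R) :
    ∫ x in Set.Icc (-R) R, gauss μ σ x ≤
      2 * R * (Real.exp (-(max (|μ| - R) 0)^2 / (2*σ^2)) / (Real.sqrt (2*π) * σ)) := by
  set d : ℝ := max (|μ| - R) 0 with hd
  set cst : ℝ := Real.exp (-d^2 / (2*σ^2)) / (Real.sqrt (2*π) * σ) with hcst
  have hIcc : volume (Set.Icc (-R) R) < ⊤ := by
    rw [Real.volume_Icc]; exact ENNReal.ofReal_lt_top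
  have h1 : ∫ x in Set.Icc (-R) R, gauss μ σ x ≤ ∫ _x in Set.Icc (-R) R, cst := by
    apply setIntegral_mono_on
    · exact (integrable_gauss μ σ hσ).integrableOn
    · exact integrableOn_const hIcc.ne
    · exact measurableSet_Icc
    · intro x hx
      rw [gauss, hcst]
      apply div_le_div_of_nonneg_right _ (by positivity)
      apply Real.exp_le_exp.mpr
      apply div_le_div_of_nonneg_right _ (by positivity)
      rw [neg_le_neg_iff]
      have hdx : d ≤ |x - μ| := by
        rw [hd, max_le_iff]
        constructor
        · have h2 : |μ| - |x| ≤ |x - μ| := by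
            have := abs_sub_abs_le_abs_sub μ x
            rwa [abs_sub_comm μ x] at this
          have h3 : |x| ≤ R := abs_le.mpr ⟨hx.1, hx.2⟩
          linarith
        · exact abs_nonneg _
      calc d^2 ≤ |x - μ|^2 := by
            apply pow_le_pow_left₀ (le_max_right _ 0) hdx
        _ = (x - μ)^2 := sq_abs _
  have h2 : ∫ _x in Set.Icc (-R) R, cst = (2*R) * cst := by
    rw [setIntegral_const, Real.volume_real_Icc, smul_eq_mul,
      max_eq_left (by linarith)]
    ring_nf
  rw [h2] at h1
  exact h1

lemma exists_R {f : ℝ → ℝ} (hcoer : Tendsto f (cocompact ℝ) atTop) (K : ℝ) :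
    ∃ R : ℝ, 1 ≤ R ∧ ∀ x, R < |x| → K ≤ f x := by
  have h := hcoer.eventually (eventually_ge_atTop K)
  rw [cocompact_eq_atBot_atTop, eventually_sup] at h
  obtain ⟨h1, h2⟩ := h
  obtain ⟨a, ha⟩ := eventually_atBot.mp h1
  obtain ⟨b, hb⟩ := eventually_atTop.mp h2
  refine ⟨max 1 (max |a| |b|), le_max_left _ _, fun x hx => ?_⟩
  rcases le_or_gt 0 x with h | h
  · apply hb
    have : |b| ≤ max 1 (max |a| |b|) := le_trans (le_max_right _ _) (le_max_right _ _)
    rw [abs_of_nonneg h] at hx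
    have hb2 : b ≤ |b| := le_abs_self b
    linarith
  · apply ha
    have h3 : |a| ≤ max 1 (max |a| |b|) := le_trans (le_max_left _ _) (le_max_right _ _)
    rw [abs_of_neg h] at hx
    have : -x > |a| := by linarith
    have : x < -|a| := by linarith
    calc x ≤ -|a| := this.le
      _ ≤ a := neg_abs_le a

noncomputable def relaxF (f : ℝ → ℝ) (μ σ : ℝ) : ℝ := ∫ x : ℝ, f x * gauss μ σ x

def PolyGrowth (f : ℝ → ℝ) : Prop :=
  ∃ m : ℝ, 0 < m ∧ Tendsto (fun x : ℝ => f x / |x| ^ m) (cocompact ℝ) (𝓝 0)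

set_option maxHeartbeats 1000000 in
theorem stmt2 (f : ℝ → ℝ) (hf : ContDiff ℝ 2 f) (hg : PolyGrowth f)
    (hcoer : Tendsto f (cocompact ℝ) atTop) :
    ∀ M : ℝ, ∃ A : ℝ, ∀ μ σ : ℝ, 0 < σ → A < |μ| + σ → M < relaxF f μ σ := by
  intro M
  obtain ⟨m, hm, htend⟩ := hg
  have hfc : Continuous f := hf.continuous
  obtain ⟨C, hC0, hbd⟩ := poly_bound hfc hm htend
  -- global lower bound B for f, with B ≤ M
  obtain ⟨R₀, hR₀1, hR₀⟩ := exists_R hcoer 0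
  obtain ⟨x₀, hx₀mem, hx₀⟩ := (isCompact_Icc (a := -R₀) (b := R₀)).exists_isMinOn
    (Set.nonempty_Icc.mpr (by linarith)) hfc.continuousOn
  set B : ℝ := min (min 0 (f x₀)) M with hBdef
  have hB : ∀ x, B ≤ f x := by
    intro x
    rcases le_or_gt |x| R₀ with h | h
    · have h2 : f x₀ ≤ f x := hx₀ (Set.mem_Icc.mpr (abs_le.mp h))
      have h3 : B ≤ min 0 (f x₀) := min_le_left _ _
      have h4 : min 0 (f x₀) ≤ f x₀ := min_le_right _ _
      linarith
    · have h2 : (0:ℝ) ≤ f x := hR₀ x h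
      have h3 : B ≤ min 0 (f x₀) := min_le_left _ _
      have h4 : min 0 (f x₀) ≤ 0 := min_le_left _ _
      linarith
  have hBM : B ≤ M := min_le_right _ _
  set K : ℝ := M + 1 with hKdef
  have hKB : 1 ≤ K - B := by rw [hKdef]; linarith
  set ε : ℝ := 1 / (2 * (K - B)) with hε
  have hε0 : 0 < ε := by rw [hε]; positivity
  obtain ⟨R, hR1, hRK⟩ := exists_R hcoer K
  set T : ℝ := max 1 (4 * R / ε) with hT
  have hT1 : 1 ≤ T := le_max_left _ _
  have h4RT : 4 * R ≤ ε * T := by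
    have hT4 : 4 * R / ε ≤ T := le_max_right _ _
    rw [div_le_iff₀ hε0] at hT4
    linarith
  refine ⟨R + T + T^2, fun μ σ hσ hAlt => ?_⟩
  set d : ℝ := max (|μ| - R) 0 with hd
  have hd0 : 0 ≤ d := le_max_right _ _
  set p : ℝ := ∫ x in Set.Icc (-R) R, gauss μ σ x with hp
  have hpb := mass_bound μ σ R hσ hR1
  have hsp := sqrt_two_pi_pos
  have h1pi := one_le_sqrt_two_pi
  -- the mass of the gaussian on [-R, R] is at most ε
  have hmass : p ≤ ε := by
    rcases le_or_gt T σ with hcase | hcase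
    · -- large σ
      have hexp1 : Real.exp (-d^2/(2*σ^2)) ≤ 1 := by
        apply Real.exp_le_one_iff.mpr
        rw [neg_div]
        have : (0:ℝ) ≤ d^2/(2*σ^2) := by positivity
        linarith
      have hq : Real.exp (-d^2/(2*σ^2)) / (Real.sqrt (2*π) * σ) ≤ 1/σ :=
        div_le_div₀ zero_le_one hexp1 hσ (by nlinarith)
      have h5 : p ≤ 2*R*(1/σ) := hpb.trans (mul_le_mul_of_nonneg_left hq (by linarith))
      have h6 : 2*R*(1/σ) ≤ ε := by
        rw [mul_one_div, div_le_iff₀ hσ]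
        nlinarith [mul_le_mul_of_nonneg_left hcase hε0.le]
      linarith
    · -- large |μ|
      have hμ : R + T^2 < |μ| := by linarith
      have hdval : T^2 < d := lt_of_lt_of_le (by linarith) (le_max_left _ _)
      have hdpos : 0 < d := by nlinarith
      have hexp2 : Real.exp (-d^2/(2*σ^2)) ≤ 2*σ^2/d^2 := by
        have h := exp_neg_le_inv (t := d^2/(2*σ^2)) (by positivity)
        rw [neg_div]
        rw [inv_div] at h
        exact h
      have hq : Real.exp (-d^2/(2*σ^2)) / (Real.sqrt (2*π) * σ) ≤ (2*σ^2/d^2)/σ :=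
        div_le_div₀ (by positivity) hexp2 hσ (by nlinarith)
      have h5 : p ≤ 2*R*((2*σ^2/d^2)/σ) :=
        hpb.trans (mul_le_mul_of_nonneg_left hq (by linarith))
      have h6 : 2*R*((2*σ^2/d^2)/σ) = 4*R*σ/d^2 := by
        field_simp
        ring
      have h7 : 4*R*σ/d^2 ≤ ε := by
        rw [div_le_iff₀ (by positivity)]
        have e1 : 4*R*T ≤ ε*T*T := mul_le_mul_of_nonneg_right h4RT (by linarith)
        have e2 : 4*R*σ ≤ 4*R*T := mul_le_mul_of_nonneg_left hcase.le (by linarith)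
        have e3 : T^2*T^2 ≤ d*d := mul_le_mul hdval.le hdval.le (by positivity) hdpos.le
        have e4 : ε*(T*T) ≤ ε*(T^2*T^2) := by
          apply mul_le_mul_of_nonneg_left _ hε0.le
          have h1T : 1 ≤ T^2 := by nlinarith
          nlinarith
        have e5 : ε*(T^2*T^2) ≤ ε*(d*d) := mul_le_mul_of_nonneg_left e3 hε0.le
        have e6 : ε*(d*d) = ε*d^2 := by ring
        have e7 : ε*T*T = ε*(T*T) := by ring
        linarith
      linarith
  -- lower bound for the integral
  have hint := integrable_f_gauss hfc hm hC0 hbd μ σ hσ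
  have hgint := integrable_gauss μ σ hσ
  set s : Set ℝ := Set.Icc (-R) R with hsdef
  have hs : MeasurableSet s := measurableSet_Icc
  have hsplitf : (∫ x in s, f x * gauss μ σ x) + ∫ x in sᶜ, f x * gauss μ σ x
      = relaxF f μ σ := by
    simp only [relaxF]
    exact integral_add_compl hs hint
  have hsplitg : (∫ x in s, gauss μ σ x) + ∫ x in sᶜ, gauss μ σ x = 1 :=
    (integral_add_compl hs hgint).trans (integral_gauss μ σ hσ)
  have hlow1 : B * p ≤ ∫ x in s, f x * gauss μ σ x := by
    have h := setIntegral_mono_on ((hgint.const_mul B).integrableOn)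
      hint.integrableOn hs
      (fun x _ => mul_le_mul_of_nonneg_right (hB x) (gauss_nonneg μ σ x hσ))
    rwa [integral_const_mul] at h
  have hlow2 : K * ∫ x in sᶜ, gauss μ σ x ≤ ∫ x in sᶜ, f x * gauss μ σ x := by
    have h := setIntegral_mono_on ((hgint.const_mul K).integrableOn)
      hint.integrableOn hs.compl ?_
    · rwa [integral_const_mul] at h
    · intro x hx
      apply mul_le_mul_of_nonneg_right _ (gauss_nonneg μ σ x hσ)
      apply hRK
      rw [hsdef] at hx
      simp only [Set.mem_compl_iff, Set.mem_Icc, not_and_or, not_le] at hx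
      rcases hx with h | h
      · calc R < -x := by linarith
          _ ≤ |x| := neg_le_abs x
      · calc R < x := h
          _ ≤ |x| := le_abs_self x
  -- combine
  have hKBp : (K - B) * p ≤ (K - B) * ε :=
    mul_le_mul_of_nonneg_left hmass (by linarith)
  have hεval : (K - B) * ε = 1/2 := by
    rw [hε]
    field_simp
  have hfinal : K - (K - B) * p ≤ relaxF f μ σ := by
    have hq : ∫ x in sᶜ, gauss μ σ x = 1 - p := by rw [hp]; linarith
    rw [hq] at hlow2
    nlinarith [hlow1, hlow2, hsplitf]
  rw [hKdef] at hfinal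
  nlinarith [hKBp, hεval, hfinal]
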